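/- Let d ≥ 2 be a natural number with 2 ln d ≤ (√2 − 1) · √d, and let ξ and ξ' be independent, each distributed according to the standard Gaussian measure γ_d on ℝ^d. Then the probability that |⟨ξ, ξ'⟩| ≥ √(2d) · ln d is at most 4 · d^{−(ln d)/2}. -/

import Mathlib

open MeasureTheory ProbabilityTheory Real
open scoped RealInnerProductSpace ENNReal NNReal

/-- The standard Gaussian measure on `ℝ^d`. -/
noncomputable def stdGaussian (d : ℕ) : Measure (EuclideanSpace ℝ (Fin d)) :=
  (Measure.pi fun _ : Fin d => gaussianReal 0 1).map (MeasurableEquiv.toLp 2 (Fin d → ℝ))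

lemma integrable_exp_quadratic {b : ℝ} (hb : 0 < b) (c : ℝ) :
    Integrable (fun x : ℝ => exp (-b*x^2 + c*x)) := by
  have h : ∀ x : ℝ, -b*x^2 + c*x = -b*(x - c/(2*b))^2 + c^2/(4*b) := by
    intro x; field_simp; ring
  simp_rw [h, Real.exp_add]
  exact (((integrable_exp_neg_mul_sq hb).comp_sub_right (c/(2*b))).mul_const _)


lemma integral_exp_quadratic {b : ℝ} (hb : 0 < b) (c : ℝ) :
    ∫ x : ℝ, exp (-b*x^2 + c*x) = Real.sqrt (π/b) * exp (c^2/(4*b)) := by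
  have h : ∀ x : ℝ, -b*x^2 + c*x = -b*(x - c/(2*b))^2 + c^2/(4*b) := by
    intro x; field_simp; ring
  simp_rw [h, Real.exp_add, integral_mul_const]
  rw [integral_sub_right_eq_self (fun x : ℝ => Real.exp (-b*x^2)) (c/(2*b)),
    integral_gaussian]

lemma gaussianReal_eq_withDensity :
    gaussianReal 0 1 = volume.withDensity
      (fun x => ((gaussianPDFReal 0 1 x).toNNReal : ℝ≥0∞)) := by
  rw [gaussianReal_of_var_ne_zero 0 one_ne_zero]
  rfl

lemma integral_gaussianReal_eq (g : ℝ → ℝ) :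
    ∫ x, g x ∂(gaussianReal 0 1)
      = ∫ x, gaussianPDFReal 0 1 x * g x := by
  rw [gaussianReal_eq_withDensity,
    integral_withDensity_eq_integral_smul
      ((measurable_gaussianPDFReal 0 1).real_toNNReal) g]
  congr 1
  ext x
  rw [NNReal.smul_def, Real.coe_toNNReal _ (gaussianPDFReal_nonneg 0 1 x), smul_eq_mul]

lemma integrable_gaussianReal_iff (g : ℝ → ℝ) :
    Integrable g (gaussianReal 0 1)
      ↔ Integrable (fun x => gaussianPDFReal 0 1 x * g x) := by
  rw [gaussianReal_eq_withDensity,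
    integrable_withDensity_iff_integrable_smul
      ((measurable_gaussianPDFReal 0 1).real_toNNReal)]
  constructor <;> intro h <;> refine h.congr (Filter.Eventually.of_forall fun x => ?_) <;>
    simp [NNReal.smul_def, Real.coe_toNNReal _ (gaussianPDFReal_nonneg 0 1 x)]

lemma pdf_mul_eq (c s : ℝ) (x : ℝ) :
    gaussianPDFReal 0 1 x * exp (c*x + s*x^2) =
      (Real.sqrt (2*π))⁻¹ * exp (-(1/2 - s)*x^2 + c*x) := by
  rw [gaussianPDFReal]
  push_cast
  rw [mul_one, mul_one, mul_assoc, ← Real.exp_add]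
  ring_nf

lemma integrable_gauss_exp (c s : ℝ) (hs : s < 1/2) :
    Integrable (fun x => exp (c*x + s*x^2)) (gaussianReal 0 1) := by
  rw [integrable_gaussianReal_iff]
  simp_rw [pdf_mul_eq]
  exact (integrable_exp_quadratic (by linarith) c).const_mul _

lemma integral_gauss_exp (c s : ℝ) (hs : s < 1/2) :
    ∫ x, exp (c*x + s*x^2) ∂(gaussianReal 0 1)
      = (Real.sqrt (1 - 2*s))⁻¹ * exp (c^2/(2*(1-2*s))) := by
  rw [integral_gaussianReal_eq]
  simp_rw [pdf_mul_eq]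
  rw [integral_const_mul, integral_exp_quadratic (by linarith) c]
  have h1 : (0:ℝ) < 1 - 2*s := by linarith
  have h2 : π/(1/2 - s) = (2*π) * (1-2*s)⁻¹ := by
    field_simp
  rw [h2]
  have h5 : Real.sqrt (2*π*(1-2*s)⁻¹) = Real.sqrt 2 * Real.sqrt π * (Real.sqrt (1-2*s))⁻¹ := by
    rw [Real.sqrt_mul (by positivity), Real.sqrt_inv, Real.sqrt_mul (by norm_num)]
  rw [h5]
  have h3 : Real.sqrt 2 * Real.sqrt π ≠ 0 := by positivity
  have h4 : c^2/(4*(1/2-s)) = c^2/(2*(1-2*s)) := by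
    congr 1
    ring
  rw [h4]
  field_simp
  rw [Real.sqrt_mul (by norm_num)]

noncomputable def γ2 : Measure (ℝ × ℝ) := (gaussianReal 0 1).prod (gaussianReal 0 1)

instance : IsProbabilityMeasure γ2 := by unfold γ2; infer_instance

lemma inner_int (l x : ℝ) : Integrable (fun y => exp (l * (x * y))) (gaussianReal 0 1) := by
  have := integrable_gauss_exp (l*x) 0 (by norm_num)
  refine this.congr (Filter.Eventually.of_forall fun y => ?_)
  ring_nf

lemma inner_eq (l x : ℝ) :
    ∫ y, exp (l * (x * y)) ∂(gaussianReal 0 1) = exp ((l^2/2) * x^2) := by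
  rw [show (fun y => exp (l * (x * y))) = (fun y => exp ((l*x)*y + 0*y^2)) from ?_,
    integral_gauss_exp (l*x) 0 (by norm_num)]
  · norm_num
    rw [show (l*x)^2/2 = l^2/2*x^2 by ring]
  · funext y; ring_nf

lemma outer_int (l : ℝ) (hl : l^2 < 1) :
    Integrable (fun x => exp ((l^2/2) * x^2)) (gaussianReal 0 1) := by
  have := integrable_gauss_exp 0 (l^2/2) (by linarith)
  refine this.congr (Filter.Eventually.of_forall fun y => ?_)
  ring_nf

lemma pair_integrable (l : ℝ) (hl : l^2 < 1) :
    Integrable (fun p : ℝ × ℝ => exp (l * (p.1 * p.2))) γ2 := by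
  rw [γ2, integrable_prod_iff]
  · refine ⟨Filter.Eventually.of_forall fun x => inner_int l x, ?_⟩
    refine (outer_int l hl).congr (Filter.Eventually.of_forall fun x => ?_)
    simp_rw [norm_of_nonneg (Real.exp_nonneg _)]
    rw [inner_eq]
  · exact (Real.continuous_exp.comp (continuous_const.mul
      (continuous_fst.mul continuous_snd))).aestronglyMeasurable

lemma pair_integral (l : ℝ) (hl : l^2 < 1) :
    ∫ p : ℝ × ℝ, exp (l * (p.1 * p.2)) ∂γ2 = (Real.sqrt (1 - l^2))⁻¹ := by
  rw [γ2, integral_prod _ (pair_integrable l hl)]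
  simp_rw [inner_eq]
  rw [show (fun x : ℝ => exp (l^2/2 * x^2)) = (fun x => exp (0*x + l^2/2*x^2)) from ?_,
    integral_gauss_exp 0 (l^2/2) (by linarith)]
  · norm_num
    rw [show 1 - 2 * (l^2/2) = 1 - l^2 by ring]
  · funext y; ring_nf

lemma integrable_pi_prod {α : Type*} [MeasurableSpace α] (ν : Measure α) [IsProbabilityMeasure ν]
    (g : α → ℝ) (hg : Integrable g ν) (n : ℕ) :
    Integrable (fun q : Fin n → α => ∏ i, g (q i)) (Measure.pi fun _ : Fin n => ν) := by
  induction n with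
  | zero => simp only [Finset.univ_eq_empty, Finset.prod_empty]
            exact integrable_const 1
  | succ n n_ih =>
      have := ((measurePreserving_piFinSuccAbove (fun _ : Fin (n+1) => ν) 0).symm)
      rw [← this.integrable_comp_emb (MeasurableEquiv.measurableEmbedding _)]
      simp_rw [MeasurableEquiv.piFinSuccAbove_symm_apply, Fin.insertNthEquiv,
        Fin.prod_univ_succ, Fin.insertNth_zero]
      simp only [Fin.zero_succAbove, Function.comp_def, Fin.cons_zero, Fin.cons_succ,
        Equiv.coe_fn_mk]
      exact Integrable.mul_prod hg n_ih

lemma integral_pi_prod {α : Type*} [MeasurableSpace α] (ν : Measure α) [IsProbabilityMeasure ν]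
    (g : α → ℝ) (n : ℕ) :
    ∫ q, (∏ i, g (q i)) ∂(Measure.pi fun _ : Fin n => ν) = (∫ x, g x ∂ν) ^ n := by
  induction n with
  | zero => simp
  | succ n n_ih =>
      calc
        _ = ∫ x : α × (Fin n → α), g x.1 * ∏ i : Fin n, g (x.2 i)
              ∂(ν.prod (Measure.pi fun _ : Fin n => ν)) := by
          rw [← ((measurePreserving_piFinSuccAbove
            (fun _ : Fin (n+1) => ν) 0).symm).integral_comp']
          congr 1
          funext x
          rw [MeasurableEquiv.piFinSuccAbove_symm_apply, Fin.prod_univ_succ]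
          simp [Fin.insertNthEquiv, Fin.insertNth_zero, Fin.zero_succAbove]
        _ = (∫ x, g x ∂ν) ^ (n+1) := by
          rw [integral_prod_mul (L := ℝ) (f := g) (g := fun y : Fin n → α => ∏ i, g (y i)),
            n_ih, pow_succ, mul_comm]

section
variable (d : ℕ)

noncomputable abbrev μ2 (d : ℕ) : Measure (EuclideanSpace ℝ (Fin d) × EuclideanSpace ℝ (Fin d)) :=
  (stdGaussian d).prod (stdGaussian d)

lemma comp_eq (l : ℝ) (x y : EuclideanSpace ℝ (Fin d)) :
    exp (l * ⟪x, y⟫) = ∏ i, exp (l * (x i * y i)) := by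
  rw [PiLp.inner_apply]
  simp only [RCLike.inner_apply, conj_trivial]
  rw [Finset.mul_sum, Real.exp_sum]
  refine Finset.prod_congr rfl fun i _ => ?_
  ring_nf

lemma transfer (l : ℝ) (hl : l^2 < 1) :
    Integrable (fun p : EuclideanSpace ℝ (Fin d) × EuclideanSpace ℝ (Fin d) =>
        exp (l * ⟪p.1, p.2⟫)) (μ2 d) ∧
      ∫ p, exp (l * ⟪p.1, p.2⟫) ∂(μ2 d) = ((Real.sqrt (1 - l^2))⁻¹) ^ d := by
  have mp0 : MeasurePreserving (MeasurableEquiv.arrowProdEquivProdArrow ℝ ℝ (Fin d))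
      (Measure.pi fun _ : Fin d => γ2) ((Measure.pi fun _ : Fin d => gaussianReal 0 1).prod
        (Measure.pi fun _ : Fin d => gaussianReal 0 1)) :=
    measurePreserving_arrowProdEquivProdArrow ℝ ℝ (Fin d) (fun _ => gaussianReal 0 1)
      (fun _ => gaussianReal 0 1)
  have mpL : MeasurePreserving (MeasurableEquiv.toLp 2 (Fin d → ℝ))
      (Measure.pi fun _ : Fin d => gaussianReal 0 1) (stdGaussian d) :=
    (MeasurableEquiv.toLp 2 (Fin d → ℝ)).measurable.measurePreserving _
  have mp : MeasurePreserving ((MeasurableEquiv.arrowProdEquivProdArrow ℝ ℝ (Fin d)).trans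
      ((MeasurableEquiv.toLp 2 (Fin d → ℝ)).prodCongr (MeasurableEquiv.toLp 2 (Fin d → ℝ))))
      (Measure.pi fun _ : Fin d => γ2) (μ2 d) :=
    (mpL.prod mpL).comp mp0
  constructor
  · rw [← mp.integrable_comp_emb (MeasurableEquiv.measurableEmbedding _)]
    have : ((fun p : EuclideanSpace ℝ (Fin d) × EuclideanSpace ℝ (Fin d) =>
        exp (l * ⟪p.1, p.2⟫)) ∘ ((MeasurableEquiv.arrowProdEquivProdArrow ℝ ℝ (Fin d)).trans
          ((MeasurableEquiv.toLp 2 (Fin d → ℝ)).prodCongr (MeasurableEquiv.toLp 2 (Fin d → ℝ)))))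
        = fun q : Fin d → ℝ × ℝ => ∏ i, exp (l * ((q i).1 * (q i).2)) := by
      funext q
      simp only [Function.comp_apply]
      rw [comp_eq]
      rfl
    rw [this]
    exact integrable_pi_prod γ2 _ (pair_integrable l hl) d
  · have h2 := mp.integral_comp' (fun p : EuclideanSpace ℝ (Fin d) × EuclideanSpace ℝ (Fin d) =>
        exp (l * ⟪p.1, p.2⟫))
    have hBC : (∫ q : Fin d → ℝ × ℝ,
          (fun p : EuclideanSpace ℝ (Fin d) × EuclideanSpace ℝ (Fin d) => exp (l * ⟪p.1, p.2⟫))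
            (((MeasurableEquiv.arrowProdEquivProdArrow ℝ ℝ (Fin d)).trans
          ((MeasurableEquiv.toLp 2 (Fin d → ℝ)).prodCongr (MeasurableEquiv.toLp 2 (Fin d → ℝ)))) q)
          ∂(Measure.pi fun _ : Fin d => γ2))
        = ∫ q : Fin d → ℝ × ℝ, ∏ i, exp (l * ((q i).1 * (q i).2))
          ∂(Measure.pi fun _ : Fin d => γ2) := by
      congr 1
      funext q
      beta_reduce
      rw [comp_eq]
      rfl
    refine (h2.symm.trans (hBC.trans ?_))
    exact (integral_pi_prod γ2 (fun p : ℝ × ℝ => exp (l * (p.1 * p.2))) d).trans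
      (by rw [pair_integral l hl])
end

instance (d : ℕ) : IsProbabilityMeasure (stdGaussian d) :=
  Measure.isProbabilityMeasure_map (MeasurableEquiv.toLp 2 (Fin d → ℝ)).measurable.aemeasurable

set_option maxHeartbeats 1000000 in
theorem gaussian_inner_pair_tail_bound (d : ℕ) (hd : 2 ≤ d)
    (hlog : 2 * Real.log d ≤ (Real.sqrt 2 - 1) * Real.sqrt d) :
    ((stdGaussian d).prod (stdGaussian d))
        {p : EuclideanSpace ℝ (Fin d) × EuclideanSpace ℝ (Fin d) |
          Real.sqrt (2 * d) * Real.log d ≤ |⟪p.1, p.2⟫|} ≤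
      ENNReal.ofReal (4 * (d : ℝ) ^ (-(Real.log d) / 2)) := by
  set μ := (stdGaussian d).prod (stdGaussian d) with hμ
  set X : EuclideanSpace ℝ (Fin d) × EuclideanSpace ℝ (Fin d) → ℝ :=
    fun p => ⟪p.1, p.2⟫ with hX
  have hd1 : (1:ℝ) < d := by exact_mod_cast Nat.lt_of_lt_of_le one_lt_two hd
  have hd0 : (0:ℝ) < d := by linarith
  set L : ℝ := Real.log d with hL
  have hL0 : 0 < L := Real.log_pos hd1
  have hsd : (0:ℝ) < Real.sqrt (2*d) := Real.sqrt_pos.mpr (by linarith)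
  have hsq : Real.sqrt (2*d) ^ 2 = 2*d := Real.sq_sqrt (by linarith)
  set l : ℝ := L / Real.sqrt (2*d) with hl
  have hl0 : 0 < l := div_pos hL0 hsd
  have hsqd : Real.sqrt d ^ 2 = (d:ℝ) := Real.sq_sqrt hd0.le
  have hsqrt2 : Real.sqrt 2 ≤ 2 := by
    nlinarith [Real.sq_sqrt (show (0:ℝ) ≤ 2 by norm_num), Real.sqrt_nonneg 2]
  have hLd : 2 * L ≤ Real.sqrt d := by
    calc 2 * L ≤ (Real.sqrt 2 - 1) * Real.sqrt d := hlog
    _ ≤ 1 * Real.sqrt d := by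
        apply mul_le_mul_of_nonneg_right (by linarith) (Real.sqrt_nonneg d)
    _ = Real.sqrt d := one_mul _
  have hl2 : l^2 = L^2 / (2*d) := by
    rw [hl, div_pow, hsq]
  have hl2le : l^2 ≤ 1/8 := by
    rw [hl2]
    rw [div_le_div_iff₀ (by linarith) (by norm_num)]
    nlinarith
  have hl2lt : l^2 < 1 := by linarith
  obtain ⟨hint, hval⟩ := transfer d l hl2lt
  obtain ⟨hint', hval'⟩ := transfer d (-l) (by rwa [neg_sq])
  set s : ℝ := Real.sqrt (2*d) * L with hs
  have hls : l * s = L^2 := by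
    rw [hl, hs]
    field_simp
  have hmgf : mgf X μ l = ((Real.sqrt (1 - l^2))⁻¹) ^ d := hval
  have hmgf' : mgf X μ (-l) = ((Real.sqrt (1 - l^2))⁻¹) ^ d := by
    rw [show ((1:ℝ) - l^2) = 1 - (-l)^2 by rw [neg_sq]]
    exact hval'
  have hub : (μ {p | s ≤ X p}).toReal ≤ exp (-l * s) * mgf X μ l :=
    measure_ge_le_exp_mul_mgf s hl0.le hint
  have hlb : (μ {p | X p ≤ -s}).toReal ≤ exp (-(-l) * -s) * mgf X μ (-l) :=
    measure_le_le_exp_mul_mgf (-s) (neg_nonpos.mpr hl0.le) hint'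
  -- bound the mgf power
  set u : ℝ := 1 - l^2 with hu
  have hu0 : 0 < u := by rw [hu]; linarith
  have hu2 : 1/2 ≤ u := by rw [hu]; linarith
  have hlogu : -Real.log u ≤ L^2 / d := by
    have h1 : Real.log u⁻¹ ≤ u⁻¹ - 1 := Real.log_le_sub_one_of_pos (inv_pos.mpr hu0)
    rw [Real.log_inv] at h1
    have h2 : u⁻¹ - 1 ≤ 2 * l^2 := by
      nlinarith [mul_inv_cancel₀ hu0.ne', inv_pos.mpr hu0]
    have h3 : 2 * l^2 = L^2 / d := by
      rw [hl2]
      field_simp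
    linarith
  have hpow : ((Real.sqrt u)⁻¹) ^ d ≤ exp (L^2/2) := by
    have hpos : 0 < (Real.sqrt u)⁻¹ := inv_pos.mpr (Real.sqrt_pos.mpr hu0)
    rw [← Real.log_le_iff_le_exp (pow_pos hpos d)]
    rw [Real.log_pow, Real.log_inv, Real.log_sqrt hu0.le]
    have h4 : (d:ℝ)/2 * (L^2/d) = L^2/2 := by
      field_simp
    have h5 := mul_le_mul_of_nonneg_left hlogu (show (0:ℝ) ≤ d/2 by positivity)
    rw [h4] at h5
    linarith
  have hBle : exp (-(l*s)) * ((Real.sqrt u)⁻¹) ^ d ≤ (d:ℝ) ^ (-(Real.log d)/2) := by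
    have hrpow : (d:ℝ) ^ (-(Real.log d)/2) = exp (-(L^2)/2) := by
      rw [Real.rpow_def_of_pos hd0, ← hL]
      congr 1
      ring
    rw [hrpow, hls]
    calc exp (-(L^2)) * ((Real.sqrt u)⁻¹) ^ d ≤ exp (-(L^2)) * exp (L^2/2) :=
      mul_le_mul_of_nonneg_left hpow (Real.exp_nonneg _)
    _ = exp (-(L^2)/2) := by rw [← Real.exp_add]; congr 1; ring
  set R : ℝ := (d:ℝ) ^ (-(Real.log d)/2) with hR
  have hR0 : 0 ≤ R := by positivity
  have hub2 : μ {p | s ≤ X p} ≤ ENNReal.ofReal R := by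
    rw [← ENNReal.ofReal_toReal (measure_ne_top μ _)]
    apply ENNReal.ofReal_le_ofReal
    refine hub.trans ?_
    rw [hmgf, neg_mul]
    exact hBle
  have hlb2 : μ {p | X p ≤ -s} ≤ ENNReal.ofReal R := by
    rw [← ENNReal.ofReal_toReal (measure_ne_top μ _)]
    apply ENNReal.ofReal_le_ofReal
    refine hlb.trans ?_
    rw [hmgf']
    rw [show -(-l) * -s = -(l*s) by ring]
    exact hBle
  have hsub : {p : EuclideanSpace ℝ (Fin d) × EuclideanSpace ℝ (Fin d) |
      Real.sqrt (2*d) * Real.log d ≤ |⟪p.1, p.2⟫|}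
      ⊆ {p | s ≤ X p} ∪ {p | X p ≤ -s} := by
    intro p hp
    simp only [Set.mem_setOf_eq] at hp
    rcases le_abs.mp hp with h | h
    · exact Or.inl h
    · exact Or.inr (le_neg.mp h)
  calc μ _ ≤ μ ({p | s ≤ X p} ∪ {p | X p ≤ -s}) := measure_mono hsub
  _ ≤ μ {p | s ≤ X p} + μ {p | X p ≤ -s} := measure_union_le _ _
  _ ≤ ENNReal.ofReal R + ENNReal.ofReal R := add_le_add hub2 hlb2
  _ = ENNReal.ofReal (R + R) := (ENNReal.ofReal_add hR0 hR0).symm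
  _ ≤ ENNReal.ofReal (4 * R) := ENNReal.ofReal_le_ofReal (by linarith)
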